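/- For any two functions f, g : ℝ → ℝ, the map V on compact intervals of ℝ defined by V([a,b]) = f(a) + g(b) (for a ≤ b) is a valuation: whenever [a,b] ∩ [a',b'] ≠ ∅, V([a,b] ∪ [a',b']) + V([a,b] ∩ [a',b']) = V([a,b]) + V([a',b']). Conversely, every valuation V on compact intervals admits such a representation V([a,b]) = f(a) + g(b). -/

import Mathlib

/-- Valuations on compact intervals of `ℝ` are exactly the maps of the form
`[a,b] ↦ f(a) + g(b)`: such maps are valuations, and conversely every valuation on
compact intervals admits such a representation. -/
theorem valuation_on_intervals_iff_endpoint_repr :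
    (∀ (f g : ℝ → ℝ) (V : Set ℝ → ℝ),
      (∀ a b : ℝ, a ≤ b → V (Set.Icc a b) = f a + g b) →
      ∀ a b a' b' : ℝ, a ≤ b → a' ≤ b' → (Set.Icc a b ∩ Set.Icc a' b').Nonempty →
        V (Set.Icc a b ∪ Set.Icc a' b') + V (Set.Icc a b ∩ Set.Icc a' b') =
          V (Set.Icc a b) + V (Set.Icc a' b')) ∧
    (∀ V : Set ℝ → ℝ,
      (∀ a b a' b' : ℝ, a ≤ b → a' ≤ b' → (Set.Icc a b ∩ Set.Icc a' b').Nonempty →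
        V (Set.Icc a b ∪ Set.Icc a' b') + V (Set.Icc a b ∩ Set.Icc a' b') =
          V (Set.Icc a b) + V (Set.Icc a' b')) →
      ∃ f g : ℝ → ℝ, ∀ a b : ℝ, a ≤ b → V (Set.Icc a b) = f a + g b) := by
  constructor
  · intro f g V hV a b a' b' hab ha'b' ⟨x, hx1, hx2⟩
    simp only [Set.mem_Icc] at hx1 hx2
    rw [Set.Icc_union_Icc' (hx2.1.trans hx1.2) (hx1.1.trans hx2.2), Set.Icc_inter_Icc]
    rw [hV _ _ hab, hV _ _ ha'b',
      hV _ _ (le_trans (min_le_left a a') (hab.trans (le_max_left b b'))),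
      hV _ _ (le_trans (max_le hx1.1 hx2.1) (le_min hx1.2 hx2.2))]
    rcases le_total a a' with h | h <;> rcases le_total b b' with h' | h' <;>
      simp [min_eq_left, min_eq_right, max_eq_left, max_eq_right, h, h'] <;> ring
  · intro V hV
    refine ⟨fun a => if a ≤ 0 then V (Set.Icc a 0)
        else V (Set.Icc a a) - V (Set.Icc 0 a) + V (Set.Icc 0 0),
      fun b => if 0 ≤ b then V (Set.Icc 0 b) - V (Set.Icc 0 0)
        else V (Set.Icc b b) - V (Set.Icc b 0), fun a b hab => ?_⟩
    have key : ∀ u v w : ℝ, u ≤ v → v ≤ w →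
        V (Set.Icc u w) + V (Set.Icc v v) = V (Set.Icc u v) + V (Set.Icc v w) := by
      intro u v w huv hvw
      have := hV u v v w huv hvw ⟨v, by simp [huv], by simp [hvw]⟩
      rwa [Set.Icc_union_Icc_eq_Icc huv hvw, Set.Icc_inter_Icc,
        max_eq_right huv, min_eq_left hvw] at this
    by_cases ha : a ≤ 0
    · by_cases hb : 0 ≤ b
      · have := key a 0 b ha hb
        simp only [if_pos ha, if_pos hb]
        linarith
      · push_neg at hb
        have := key a b 0 hab hb.le
        simp only [if_pos ha, if_neg (not_le.mpr hb)]
        linarith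
    · push_neg at ha
      have hb : 0 ≤ b := ha.le.trans hab
      have := key 0 a b ha.le hab
      simp only [if_neg (not_le.mpr ha), if_pos hb]
      linarith
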